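/- Let p ≥ 3 be a prime, χ a Dirichlet character mod p^α with α ≥ 1, and n an integer. Then |G(n,χ;p^α)|² = Σ'_{a=1}^{p^α} χ(a) · Σ'_{b=1}^{p^α} e(n·b²·(a²-1)/p^α), where Σ' denotes summation over residues coprime to p. -/

import Mathlib

open Complex

/-- The generalized quadratic Gauss sum `G(n,χ;q) = Σ_{a=1}^{q} χ(a)·e(n·a²/q)`. -/
noncomputable def Ggen (n : ℤ) (q : ℕ) (χ : DirichletCharacter ℂ q) : ℂ :=
  ∑ a ∈ Finset.Icc 1 q,
    χ (a : ZMod q) * Complex.exp (2 * Real.pi * Complex.I * (n * (a : ℂ) ^ 2 / (q : ℂ)))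

noncomputable def Fq (q : ℕ) (m : ℤ) : ℂ :=
  Complex.exp (2 * Real.pi * Complex.I * ((m : ℂ) / (q : ℂ)))

lemma Fq_congr {q : ℕ} (hq : q ≠ 0) {m m' : ℤ} (h : (m : ZMod q) = (m' : ZMod q)) :
    Fq q m = Fq q m' := by
  obtain ⟨k, hk⟩ : (q : ℤ) ∣ m - m' := by
    rwa [← ZMod.intCast_zmod_eq_zero_iff_dvd, Int.cast_sub, sub_eq_zero]
  have hk' : m = m' + q * k := by linarith
  have hqC : (q : ℂ) ≠ 0 := Nat.cast_ne_zero.mpr hq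
  unfold Fq
  rw [show 2 * Real.pi * Complex.I * ((m : ℂ) / q)
      = 2 * Real.pi * Complex.I * ((m' : ℂ) / q) + (k : ℂ) * (2 * Real.pi * Complex.I) by
    field_simp
    push_cast [hk']
    ring]
  rw [Complex.exp_add, Complex.exp_int_mul_two_pi_mul_I, mul_one]

lemma Fq_add (q : ℕ) (m m' : ℤ) : Fq q (m + m') = Fq q m * Fq q m' := by
  unfold Fq
  rw [← Complex.exp_add]
  congr 1
  push_cast
  ring

lemma Fq_conj (q : ℕ) (m : ℤ) : (starRingEnd ℂ) (Fq q m) = Fq q (-m) := by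
  unfold Fq
  rw [← Complex.exp_conj]
  congr 1
  push_cast
  simp only [map_mul, map_div₀, Complex.conj_I, map_ofNat, Complex.conj_ofReal, map_intCast, map_natCast]
  ring

lemma sum_Icc_zmod {q : ℕ} [NeZero q] (f : ZMod q → ℂ) :
    ∑ a ∈ Finset.Icc 1 q, f (a : ZMod q) = ∑ x : ZMod q, f x := by
  have hq : q ≠ 0 := NeZero.ne q
  refine Finset.sum_nbij' (fun a => (a : ZMod q))
    (fun x => if x = 0 then q else x.val) ?_ ?_ ?_ ?_ ?_
  · intro a _; exact Finset.mem_univ _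
  · intro x _
    by_cases hx : x = 0
    · simp [hx, Finset.mem_Icc, Nat.one_le_iff_ne_zero.mpr hq]
    · simp only [hx, if_false, Finset.mem_Icc]
      exact ⟨Nat.one_le_iff_ne_zero.mpr (fun h => hx ((ZMod.val_eq_zero x).mp h)),
        (ZMod.val_lt x).le⟩
  · intro a ha
    rw [Finset.mem_Icc] at ha
    by_cases h0 : (a : ZMod q) = 0
    · have : q ∣ a := (ZMod.natCast_eq_zero_iff a q).mp h0
      have : a = q := le_antisymm ha.2 (Nat.le_of_dvd (by omega) this)
      simp [h0, this]
    · have haq : a < q := by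
        rcases lt_or_eq_of_le ha.2 with h | h
        · exact h
        · exfalso; exact h0 (by rw [h]; exact ZMod.natCast_self q)
      simp [h0, ZMod.val_cast_of_lt haq]
  · intro x _
    by_cases hx : x = 0
    · simp [hx, ZMod.natCast_self]
    · simp [hx, ZMod.natCast_zmod_val]
  · intro a _; rfl

/-- for an odd prime `p`, `α ≥ 1`, a character `χ` mod `p^α` and any `n`,
`|G(n,χ;p^α)|² = Σ'_a χ(a) Σ'_b e(n·b²·(a²-1)/p^α)`, the primed sums being over
residues `1 ≤ a, b ≤ p^α` coprime to `p`. -/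
theorem Ggen_abs_sq (p : ℕ) [Fact p.Prime] (hp : 3 ≤ p) (α : ℕ) (hα : 1 ≤ α)
    (χ : DirichletCharacter ℂ (p ^ α)) (n : ℤ) :
    ((‖Ggen n (p ^ α) χ‖ : ℂ)) ^ 2 =
      ∑ a ∈ (Finset.Icc 1 (p ^ α)).filter (fun a => Nat.Coprime a p),
        χ (a : ZMod (p ^ α)) *
          ∑ b ∈ (Finset.Icc 1 (p ^ α)).filter (fun b => Nat.Coprime b p),
            Complex.exp (2 * Real.pi * Complex.I *
              (n * (b : ℂ) ^ 2 * ((a : ℂ) ^ 2 - 1) / (p : ℂ) ^ α)) := by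
  have hp0 : p ≠ 0 := (Fact.out : p.Prime).ne_zero
  haveI : NeZero (p ^ α) := ⟨pow_ne_zero α hp0⟩
  have hq : (p ^ α) ≠ 0 := NeZero.ne (p ^ α)
  have hcop : ∀ a : ℕ, Nat.Coprime a p ↔ IsUnit ((a : ZMod (p ^ α))) := by
    intro a
    rw [ZMod.isUnit_iff_coprime, Nat.coprime_pow_right_iff (by omega)]
  -- G in ZMod form
  have hG : Ggen n (p ^ α) χ = ∑ x : ZMod (p ^ α), χ x * Fq (p ^ α) (n * ((x.val : ℤ)) ^ 2) := by
    rw [← sum_Icc_zmod (fun x : ZMod (p ^ α) => χ x * Fq (p ^ α) (n * ((x.val : ℤ)) ^ 2))]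
    unfold Ggen
    refine Finset.sum_congr rfl fun a _ => ?_
    congr 1
    have he : Complex.exp (2 * Real.pi * Complex.I * ((n : ℂ) * (a : ℂ) ^ 2 / ((p ^ α : ℕ) : ℂ)))
        = Fq (p ^ α) (n * (a : ℤ) ^ 2) := by
      unfold Fq; congr 1; push_cast; ring
    rw [he]
    apply Fq_congr hq
    push_cast [ZMod.natCast_zmod_val]
    ring
  have hGc : (starRingEnd ℂ) (Ggen n (p ^ α) χ)
      = ∑ y : ZMod (p ^ α), (starRingEnd ℂ) (χ y) * Fq (p ^ α) (-(n * ((y.val : ℤ)) ^ 2)) := by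
    rw [hG, map_sum]
    exact Finset.sum_congr rfl fun y _ => by rw [map_mul, Fq_conj]
  have hdouble : Ggen n (p ^ α) χ * (starRingEnd ℂ) (Ggen n (p ^ α) χ)
      = ∑ y : ZMod (p ^ α), ∑ x : ZMod (p ^ α),
          (χ x * (starRingEnd ℂ) (χ y)) * Fq (p ^ α) (n * (((x.val : ℤ)) ^ 2 - ((y.val : ℤ)) ^ 2)) := by
    rw [hGc, hG, Finset.sum_mul_sum, Finset.sum_comm]
    refine Finset.sum_congr rfl fun y _ => Finset.sum_congr rfl fun x _ => ?_
    have h2 : n * (((x.val : ℤ)) ^ 2 - ((y.val : ℤ)) ^ 2)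
        = (n * ((x.val : ℤ)) ^ 2) + (-(n * ((y.val : ℤ)) ^ 2)) := by ring
    rw [h2, Fq_add]
    ring
  have key : ∀ y : ZMod (p ^ α),
      (∑ x : ZMod (p ^ α), (χ x * (starRingEnd ℂ) (χ y))
          * Fq (p ^ α) (n * (((x.val : ℤ)) ^ 2 - ((y.val : ℤ)) ^ 2)))
      = ∑ x : ZMod (p ^ α), χ x *
          (if IsUnit y then Fq (p ^ α) (n * ((y.val : ℤ)) ^ 2 * (((x.val : ℤ)) ^ 2 - 1)) else 0) := by
    intro y
    by_cases hy : IsUnit y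
    · obtain ⟨u, hu⟩ := hy
      simp only [if_pos (hu ▸ u.isUnit)]
      rw [← Equiv.sum_comp (Units.mulRight u)
        (fun x => (χ x * (starRingEnd ℂ) (χ y))
          * Fq (p ^ α) (n * (((x.val : ℤ)) ^ 2 - ((y.val : ℤ)) ^ 2)))]
      refine Finset.sum_congr rfl fun x _ => ?_
      have hxy : (Units.mulRight u) x = x * y := by rw [← hu]; rfl
      rw [hxy]
      have h1 : χ y * (starRingEnd ℂ) (χ y) = 1 := by
        have hn : ‖χ y‖ = 1 := hu ▸ χ.unit_norm_eq_one u
        rw [Complex.mul_conj, Complex.normSq_eq_norm_sq, hn]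
        norm_num
      have hF : Fq (p ^ α) (n * ((((x * y).val : ℤ)) ^ 2 - ((y.val : ℤ)) ^ 2))
          = Fq (p ^ α) (n * ((y.val : ℤ)) ^ 2 * (((x.val : ℤ)) ^ 2 - 1)) := by
        apply Fq_congr hq
        push_cast [ZMod.natCast_zmod_val]
        ring
      rw [map_mul, hF]
      calc χ x * χ y * (starRingEnd ℂ) (χ y)
            * Fq (p ^ α) (n * ((y.val : ℤ)) ^ 2 * (((x.val : ℤ)) ^ 2 - 1))
          = χ x * (χ y * (starRingEnd ℂ) (χ y))
            * Fq (p ^ α) (n * ((y.val : ℤ)) ^ 2 * (((x.val : ℤ)) ^ 2 - 1)) := by ring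
        _ = χ x * Fq (p ^ α) (n * ((y.val : ℤ)) ^ 2 * (((x.val : ℤ)) ^ 2 - 1)) := by rw [h1]; ring
    · simp [MulChar.map_nonunit χ hy, hy]
  -- RHS in ZMod form
  have hRHS : (∑ a ∈ (Finset.Icc 1 (p ^ α)).filter (fun a => Nat.Coprime a p),
        χ (a : ZMod (p ^ α)) *
          ∑ b ∈ (Finset.Icc 1 (p ^ α)).filter (fun b => Nat.Coprime b p),
            Complex.exp (2 * Real.pi * Complex.I *
              (n * (b : ℂ) ^ 2 * ((a : ℂ) ^ 2 - 1) / (p : ℂ) ^ α)))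
      = ∑ x : ZMod (p ^ α), χ x * ∑ y : ZMod (p ^ α),
          (if IsUnit y then Fq (p ^ α) (n * ((y.val : ℤ)) ^ 2 * (((x.val : ℤ)) ^ 2 - 1)) else 0) := by
    rw [Finset.sum_subset (Finset.filter_subset _ _) (by
      intro a ha hna
      rw [Finset.mem_filter] at hna
      have : ¬ Nat.Coprime a p := fun h => hna ⟨ha, h⟩
      rw [MulChar.map_nonunit χ (fun h => this ((hcop a).mpr h)), zero_mul])]
    rw [← sum_Icc_zmod (fun x : ZMod (p ^ α) => χ x * ∑ y : ZMod (p ^ α),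
      (if IsUnit y then Fq (p ^ α) (n * ((y.val : ℤ)) ^ 2 * (((x.val : ℤ)) ^ 2 - 1)) else 0))]
    refine Finset.sum_congr rfl fun a _ => ?_
    congr 1
    rw [Finset.sum_filter,
      ← sum_Icc_zmod (fun y : ZMod (p ^ α) =>
        (if IsUnit y then
          Fq (p ^ α) (n * ((y.val : ℤ)) ^ 2 * (((((a : ZMod (p ^ α)).val : ℤ))) ^ 2 - 1)) else 0))]
    refine Finset.sum_congr rfl fun b _ => ?_
    refine if_congr (hcop b) ?_ rfl
    have he : Complex.exp (2 * Real.pi * Complex.I *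
          ((n : ℂ) * (b : ℂ) ^ 2 * ((a : ℂ) ^ 2 - 1) / (p : ℂ) ^ α))
        = Fq (p ^ α) (n * (b : ℤ) ^ 2 * ((a : ℤ) ^ 2 - 1)) := by
      unfold Fq; congr 1; push_cast; ring
    rw [he]
    apply Fq_congr hq
    push_cast [ZMod.natCast_zmod_val]
    ring
  calc ((‖Ggen n (p ^ α) χ‖ : ℂ)) ^ 2
      = Ggen n (p ^ α) χ * (starRingEnd ℂ) (Ggen n (p ^ α) χ) := by
        rw [← Complex.ofReal_pow, Complex.sq_norm, Complex.mul_conj]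
    _ = ∑ y : ZMod (p ^ α), ∑ x : ZMod (p ^ α),
          (χ x * (starRingEnd ℂ) (χ y))
            * Fq (p ^ α) (n * (((x.val : ℤ)) ^ 2 - ((y.val : ℤ)) ^ 2)) := hdouble
    _ = ∑ y : ZMod (p ^ α), ∑ x : ZMod (p ^ α), χ x *
          (if IsUnit y then Fq (p ^ α) (n * ((y.val : ℤ)) ^ 2 * (((x.val : ℤ)) ^ 2 - 1)) else 0) :=
        Finset.sum_congr rfl fun y _ => key y
    _ = ∑ x : ZMod (p ^ α), ∑ y : ZMod (p ^ α), χ x *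
          (if IsUnit y then Fq (p ^ α) (n * ((y.val : ℤ)) ^ 2 * (((x.val : ℤ)) ^ 2 - 1)) else 0) :=
        Finset.sum_comm
    _ = ∑ x : ZMod (p ^ α), χ x * ∑ y : ZMod (p ^ α),
          (if IsUnit y then Fq (p ^ α) (n * ((y.val : ℤ)) ^ 2 * (((x.val : ℤ)) ^ 2 - 1)) else 0) := by
        simp [Finset.mul_sum]
    _ = _ := hRHS.symm
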